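/- Let G be a strongly connected directed graph with all distances between distinct vertices at most 2, and let V1, V2 ⊆ V(G) be disjoint nonempty vertex sets such that for every x ∈ V1 and y ∈ V2 both (x,y) ∈ E(G) and (y,x) ∈ E(G). Let R1 ⊆ V1 resolve V1 in G and R2 ⊆ V2 resolve V2 in G, both nonempty. If V1 has no 1-vertex w.r.t. R1 or V2 has no 1-vertex w.r.t. R2, then R1 ∪ R2 resolves V1 ∪ V2 in G. -/
import Mathlib


universe u

/-- There is a directed walk of length `n` from `u` to `v` in the digraph
with edge relation `E`. -/
def HasWalkLen {V : Type u} (E : V → V → Prop) (u v : V) (n : ℕ) : Prop :=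
  ∃ f : Fin (n + 1) → V, f 0 = u ∧ f (Fin.last n) = v ∧
    ∀ i : Fin n, E (f i.castSucc) (f i.succ)

/-- `v` is reachable from `u` by a directed walk. -/
def Reaches {V : Type u} (E : V → V → Prop) (u v : V) : Prop :=
  ∃ n, HasWalkLen E u v n

/-- Directed distance from `u` to `v` (length of a shortest directed path);
a junk value (`sInf ∅ = 0`) if `v` is unreachable from `u`. -/
noncomputable def ddist {V : Type u} (E : V → V → Prop) (u v : V) : ℕ :=
  sInf {n | HasWalkLen E u v n}

/-- `w` resolves the vertices `u` and `v`: `w = u`, or `w = v`, or both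
distances from `w` are defined (reachable) and different. -/
def Resolves {V : Type u} (E : V → V → Prop) (w u v : V) : Prop :=
  w = u ∨ w = v ∨
    (Reaches E w u ∧ Reaches E w v ∧ ddist E w u ≠ ddist E w v)

/-- `R` resolves the vertex set `U`: every pair of distinct vertices of `U`
is resolved by some member of `R`. -/
def ResolvesSet {V : Type u} (E : V → V → Prop) (R U : Set V) : Prop :=
  ∀ u ∈ U, ∀ v ∈ U, u ≠ v → ∃ w ∈ R, Resolves E w u v

/-- The digraph is strongly connected on the vertex set `S`. -/
def SConn {V : Type u} (E : V → V → Prop) (S : Set V) : Prop :=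
  ∀ u ∈ S, ∀ v ∈ S, Reaches E u v

/-- `u` is a 1-vertex w.r.t. `R`: `u ∉ R` and every `w ∈ R` has an edge to `u`. -/
def OneVertex {V : Type u} (E : V → V → Prop) (R : Set V) (u : V) : Prop :=
  u ∉ R ∧ ∀ w ∈ R, E w u

/-- `u` is a 2-vertex w.r.t. `R`: `u ∉ R` and no `w ∈ R` has an edge to `u`. -/
def TwoVertex {V : Type u} (E : V → V → Prop) (R : Set V) (u : V) : Prop :=
  u ∉ R ∧ ∀ w ∈ R, ¬ E w u

/-- Directed co-graphs with vertex set `S` and edge relation `E`, built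
inductively from single vertices by disjoint union, join and directed join. -/
inductive IsDicograph {V : Type u} : Set V → (V → V → Prop) → Prop
  | single (v : V) : IsDicograph {v} fun _ _ => False
  | disjUnion {S₁ S₂ : Set V} {E₁ E₂ : V → V → Prop} :
      IsDicograph S₁ E₁ → IsDicograph S₂ E₂ → Disjoint S₁ S₂ →
      IsDicograph (S₁ ∪ S₂) fun u v => E₁ u v ∨ E₂ u v
  | join {S₁ S₂ : Set V} {E₁ E₂ : V → V → Prop} :
      IsDicograph S₁ E₁ → IsDicograph S₂ E₂ → Disjoint S₁ S₂ →
      IsDicograph (S₁ ∪ S₂) fun u v =>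
        E₁ u v ∨ E₂ u v ∨ (u ∈ S₁ ∧ v ∈ S₂) ∨ (u ∈ S₂ ∧ v ∈ S₁)
  | dirJoin {S₁ S₂ : Set V} {E₁ E₂ : V → V → Prop} :
      IsDicograph S₁ E₁ → IsDicograph S₂ E₂ → Disjoint S₁ S₂ →
      IsDicograph (S₁ ∪ S₂) fun u v => E₁ u v ∨ E₂ u v ∨ (u ∈ S₁ ∧ v ∈ S₂)


lemma walk_len_one {V : Type u} {E : V → V → Prop} {w v : V} (h : E w v) :
    HasWalkLen E w v 1 := by
  refine ⟨![w, v], rfl, rfl, fun i => ?_⟩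
  fin_cases i; exact h

lemma eq_of_walk_len_zero {V : Type u} {E : V → V → Prop} {w v : V}
    (h : HasWalkLen E w v 0) : w = v := by
  obtain ⟨f, h0, hl, _⟩ := h
  rw [← h0, ← hl]; rfl

lemma edge_of_walk_len_one {V : Type u} {E : V → V → Prop} {w v : V}
    (h : HasWalkLen E w v 1) : E w v := by
  obtain ⟨f, h0, hl, he⟩ := h
  have h1 := he 0
  have c1 : (0 : Fin 1).castSucc = (0 : Fin 2) := rfl
  have c2 : (0 : Fin 1).succ = Fin.last 1 := rfl
  rw [c1, c2, h0, hl] at h1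
  exact h1

lemma ddist_eq_one {V : Type u} {E : V → V → Prop} {w v : V}
    (hne : w ≠ v) (h : E w v) : ddist E w v = 1 := by
  have h1 : (1 : ℕ) ∈ {n | HasWalkLen E w v n} := walk_len_one h
  have hle : ddist E w v ≤ 1 := Nat.sInf_le h1
  have hmem : ddist E w v ∈ {n | HasWalkLen E w v n} := Nat.sInf_mem ⟨1, h1⟩
  have h0 : ddist E w v ≠ 0 := fun h0 => hne (eq_of_walk_len_zero (h0 ▸ hmem))
  omega

lemma ddist_eq_two {V : Type u} {E : V → V → Prop} {w v : V}
    (hne : w ≠ v) (h : ¬ E w v) (hr : Reaches E w v)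
    (hd : ddist E w v ≤ 2) : ddist E w v = 2 := by
  have hmem : ddist E w v ∈ {n | HasWalkLen E w v n} := Nat.sInf_mem hr
  have h0 : ddist E w v ≠ 0 := fun h0 => hne (eq_of_walk_len_zero (h0 ▸ hmem))
  have h1 : ddist E w v ≠ 1 := fun h1 => h (edge_of_walk_len_one (h1 ▸ hmem))
  omega

/-- Join case: if one side has no 1-vertex, the union of the two resolving
sets resolves the union of the two vertex sets. -/
theorem stmt_6 {V : Type u} {E : V → V → Prop}
    (hsc : SConn E Set.univ)
    (hdiam : ∀ u v : V, u ≠ v → ddist E u v ≤ 2)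
    {V₁ V₂ R₁ R₂ : Set V}
    (hdisj : Disjoint V₁ V₂) (hV₁ : V₁.Nonempty) (hV₂ : V₂.Nonempty)
    (hedge : ∀ x ∈ V₁, ∀ y ∈ V₂, E x y ∧ E y x)
    (hR₁ : R₁ ⊆ V₁) (hR₂ : R₂ ⊆ V₂)
    (hR₁ne : R₁.Nonempty) (hR₂ne : R₂.Nonempty)
    (hres₁ : ResolvesSet E R₁ V₁) (hres₂ : ResolvesSet E R₂ V₂)
    (h1v : (¬ ∃ u ∈ V₁, OneVertex E R₁ u) ∨ (¬ ∃ u ∈ V₂, OneVertex E R₂ u)) :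
    ResolvesSet E (R₁ ∪ R₂) (V₁ ∪ V₂) := by
  intro u hu v hv huv
  have hne12 : ∀ a ∈ V₁, ∀ b ∈ V₂, a ≠ b := fun a ha b hb hab =>
    hdisj.ne_of_mem ha hb hab
  -- key: a mixed-pair resolver
  have key : ∀ u ∈ V₁, ∀ v ∈ V₂, ∃ w ∈ R₁ ∪ R₂, Resolves E w u v := by
    intro u hu v hv
    rcases h1v with h1 | h1
    · by_cases huR : u ∈ R₁
      · exact ⟨u, Or.inl huR, Or.inl rfl⟩
      · push_neg at h1
        have := h1 u hu
        simp only [OneVertex, not_and, not_forall] at this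
        obtain ⟨w, hwR, hwe⟩ := this huR
        have hwu : w ≠ u := fun h => huR (h ▸ hwR)
        have hwv : w ≠ v := hne12 w (hR₁ hwR) v hv
        refine ⟨w, Or.inl hwR, Or.inr (Or.inr ⟨hsc w trivial u trivial,
          hsc w trivial v trivial, ?_⟩)⟩
        rw [ddist_eq_two hwu hwe (hsc w trivial u trivial) (hdiam w u hwu),
          ddist_eq_one hwv (hedge w (hR₁ hwR) v hv).1]
        omega
    · by_cases hvR : v ∈ R₂
      · exact ⟨v, Or.inr hvR, Or.inr (Or.inl rfl)⟩
      · push_neg at h1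
        have := h1 v hv
        simp only [OneVertex, not_and, not_forall] at this
        obtain ⟨w, hwR, hwe⟩ := this hvR
        have hwv : w ≠ v := fun h => hvR (h ▸ hwR)
        have hwu : w ≠ u := (hne12 u hu w (hR₂ hwR)).symm
        refine ⟨w, Or.inr hwR, Or.inr (Or.inr ⟨hsc w trivial u trivial,
          hsc w trivial v trivial, ?_⟩)⟩
        rw [ddist_eq_two hwv hwe (hsc w trivial v trivial) (hdiam w v hwv),
          ddist_eq_one hwu (hedge u hu w (hR₂ hwR)).2]
        omega
  rcases hu with hu | hu <;> rcases hv with hv | hv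
  · obtain ⟨w, hw, hres⟩ := hres₁ u hu v hv huv
    exact ⟨w, Or.inl hw, hres⟩
  · exact key u hu v hv
  · obtain ⟨w, hw, hres⟩ := key v hv u hu
    refine ⟨w, hw, ?_⟩
    rcases hres with h | h | ⟨a, b, c⟩
    · exact Or.inr (Or.inl h)
    · exact Or.inl h
    · exact Or.inr (Or.inr ⟨b, a, c.symm⟩)
  · obtain ⟨w, hw, hres⟩ := hres₂ u hu v hv huv
    exact ⟨w, Or.inr hw, hres⟩
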